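/- arXiv:2404.19396 — 5 statements merged into one kernel-verified Lean document; each statement's English description precedes it below -/
import Mathlib

section
/- The function f(t) = sqrt(2(1/t^2 - 1)(sqrt(1-t^2) - 1) + 1) satisfies f(t) ≥ t - 0.07 for all t in (0,1). -/
theorem f_ge_t_sub_point07 (t : ℝ) (ht0 : 0 < t) (ht1 : t < 1) :
    Real.sqrt (2 * (1 / t ^ 2 - 1) * (Real.sqrt (1 - t ^ 2) - 1) + 1) ≥ t - 0.07 := by
  set s := Real.sqrt (1 - t ^ 2) with hsdef
  have hs0 : 0 ≤ s := Real.sqrt_nonneg _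
  have hs2 : s ^ 2 = 1 - t ^ 2 := Real.sq_sqrt (by nlinarith)
  have hs1 : s < 1 := by nlinarith
  have h1s : (0:ℝ) < 1 + s := by linarith
  have hE : 2 * (1 / t ^ 2 - 1) * (s - 1) + 1 = (1 - s) * (1 + 2 * s) / (1 + s) := by
    rw [eq_div_iff (ne_of_gt h1s)]
    field_simp
    nlinarith [hs2, sq_nonneg t]
  rw [hE]
  rcases le_or_gt t 0.07 with h | h
  · have hnn := Real.sqrt_nonneg ((1 - s) * (1 + 2 * s) / (1 + s))
    norm_num at h ⊢
    linarith
  · rw [ge_iff_le, ← Real.sqrt_sq (by norm_num; linarith : (0:ℝ) ≤ t - 0.07)]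
    apply Real.sqrt_le_sqrt
    rw [le_div_iff₀ h1s]
    have key : (14/100)*t*(1+s) ≥ (49/10000)*(1+s) + s^2*(1-s) := by
      nlinarith [sq_nonneg (t - 68/100), sq_nonneg (s - 73/100), sq_nonneg (t*s - 1/2),
        mul_nonneg (le_of_lt (lt_of_le_of_lt (by norm_num) h)) hs0,
        sq_nonneg (t + s - 141/100), sq_nonneg (t - s),
        mul_pos (sub_pos.2 hs1) (sub_pos.2 ht1)]
    norm_num
    nlinarith [key, hs2]
end

section
/- Let t ∈ (0,1). Consider points of S₁ ∩ S₂ written as p = x₁Jn₁ + x₂Jn₂ + x₃Jv₁ + x₄Jv₂ with x₁²+x₂²+x₃²+x₄² = 1/π and x₃²+x₄² = t²/π. If ⟨p, J(⟨p,Jv₁⟩Jv₁ + ⟨p,Jv₂⟩Jv₂)⟩ = 0, then x₁ = λx₄ and x₂ = −λx₃ with λ = ±√(1−t²)/t. -/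
/-- Standard complex structure J on ℝ⁴: J(x₁,y₁,x₂,y₂) = (−y₁,x₁,−y₂,x₂). -/
def Jmap (p : Fin 4 → ℝ) : Fin 4 → ℝ := ![-p 1, p 0, -p 3, p 2]

/-- Euclidean dot product on ℝ⁴. -/
def dot4 (u v : Fin 4 → ℝ) : ℝ := ∑ i, u i * v i

set_option maxHeartbeats 1000000 in
theorem tangency_condition (t : ℝ) (ht0 : 0 < t) (ht1 : t < 1)
    (x₁ x₂ x₃ x₄ : ℝ)
    (hS₁ : x₁ ^ 2 + x₂ ^ 2 + x₃ ^ 2 + x₄ ^ 2 = 1 / Real.pi)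
    (hS₂ : x₃ ^ 2 + x₄ ^ 2 = t ^ 2 / Real.pi) :
    let v₁ : Fin 4 → ℝ :=
      (1 / Real.sqrt 2) • ![Real.sqrt (1 + t), 0, Real.sqrt (1 - t), 0]
    let v₂ : Fin 4 → ℝ :=
      (1 / Real.sqrt 2) • ![0, Real.sqrt (1 + t), 0, -Real.sqrt (1 - t)]
    let n₁ : Fin 4 → ℝ :=
      (1 / Real.sqrt 2) • ![0, Real.sqrt (1 - t), 0, Real.sqrt (1 + t)]
    let n₂ : Fin 4 → ℝ :=
      (1 / Real.sqrt 2) • ![-Real.sqrt (1 - t), 0, Real.sqrt (1 + t), 0]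
    let p : Fin 4 → ℝ :=
      x₁ • Jmap n₁ + x₂ • Jmap n₂ + x₃ • Jmap v₁ + x₄ • Jmap v₂
    dot4 p (Jmap (dot4 p (Jmap v₁) • Jmap v₁ + dot4 p (Jmap v₂) • Jmap v₂)) = 0 →
      ∃ lam : ℝ, (lam = Real.sqrt (1 - t ^ 2) / t ∨ lam = -(Real.sqrt (1 - t ^ 2) / t)) ∧
        x₁ = lam * x₄ ∧ x₂ = -lam * x₃ := by
  intro v₁ v₂ n₁ n₂ p hcond
  have ha2 : Real.sqrt (1 - t) ^ 2 = 1 - t := Real.sq_sqrt (by linarith)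
  have hb2 : Real.sqrt (1 + t) ^ 2 = 1 + t := Real.sq_sqrt (by linarith)
  have ha0 : 0 < Real.sqrt (1 - t) := Real.sqrt_pos.2 (by linarith)
  have hb0 : 0 < Real.sqrt (1 + t) := Real.sqrt_pos.2 (by linarith)
  have hc : ((Real.sqrt 2)⁻¹ : ℝ) ^ 4 = 1 / 4 := by
    rw [show (4 : ℕ) = 2 * 2 from rfl, pow_mul, inv_pow, Real.sq_sqrt (by norm_num : (0:ℝ) ≤ 2)]
    norm_num
  have ha3 : Real.sqrt (1 - t) ^ 3 = (1 - t) * Real.sqrt (1 - t) := by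
    rw [pow_succ, ha2]
  have hb3 : Real.sqrt (1 + t) ^ 3 = (1 + t) * Real.sqrt (1 + t) := by
    rw [pow_succ, hb2]
  simp only [v₁, v₂, n₁, n₂, p, Jmap, dot4, Fin.sum_univ_four] at hcond
  simp only [Pi.add_apply, Pi.smul_apply, Matrix.cons_val_zero, Matrix.cons_val_one,
    Matrix.head_cons, Matrix.cons_val_two, Matrix.tail_cons, Matrix.cons_val_three,
    smul_eq_mul] at hcond
  ring_nf at hcond
  clear_value v₁ v₂ n₁ n₂ p
  clear p v₁ v₂ n₁ n₂
  rw [hc, ha3, hb3] at hcond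
  have key : Real.sqrt (1 - t) * Real.sqrt (1 + t) * (x₁ * x₃ + x₂ * x₄) = 0 := by
    linear_combination hcond
  have h0 : x₁ * x₃ + x₂ * x₄ = 0 := by
    rcases mul_eq_zero.1 key with h | h
    · rcases mul_eq_zero.1 h with h | h <;> linarith
    · exact h
  have hπ : 0 < Real.pi := Real.pi_pos
  have hd : 0 < x₃ ^ 2 + x₄ ^ 2 := by
    rw [hS₂]; positivity
  have h12 : x₁ ^ 2 + x₂ ^ 2 = (1 - t ^ 2) / Real.pi := by
    field_simp at hS₁ hS₂ ⊢
    linarith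
  set lam : ℝ := (x₁ * x₄ - x₂ * x₃) / (x₃ ^ 2 + x₄ ^ 2) with hlam
  have hdne : x₃ ^ 2 + x₄ ^ 2 ≠ 0 := ne_of_gt hd
  have hx1 : x₁ = lam * x₄ := by
    symm
    rw [hlam, div_mul_eq_mul_div, div_eq_iff hdne]
    linear_combination (-x₃) * h0
  have hx2 : x₂ = -lam * x₃ := by
    symm
    rw [hlam, neg_mul, div_mul_eq_mul_div, ← neg_div, div_eq_iff hdne]
    linear_combination (-x₄) * h0
  have hlam2 : lam ^ 2 = (1 - t ^ 2) / t ^ 2 := by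
    rw [hlam, div_pow, div_eq_div_iff (by positivity) (by positivity)]
    have e1 : (x₁ * x₄ - x₂ * x₃) ^ 2 =
        (x₁ ^ 2 + x₂ ^ 2) * (x₃ ^ 2 + x₄ ^ 2) - (x₁ * x₃ + x₂ * x₄) ^ 2 := by ring
    rw [e1, h0, h12, hS₂]
    field_simp
    ring
  have hcsq : (Real.sqrt (1 - t ^ 2) / t) ^ 2 = (1 - t ^ 2) / t ^ 2 := by
    rw [div_pow, Real.sq_sqrt (by nlinarith)]
  have hfac : (lam - Real.sqrt (1 - t ^ 2) / t) * (lam + Real.sqrt (1 - t ^ 2) / t) = 0 := by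
    linear_combination hlam2 - hcsq
  refine ⟨lam, ?_, hx1, hx2⟩
  rcases mul_eq_zero.1 hfac with h | h
  · left; linarith
  · right; linarith
end

section
/- Let t ∈ (0,1) and let A be the symplectic matrix with A⁻¹ = [[1/√t, 0, 0, 0], [0, √t, 0, √((1−t²)/t)], [−√((1−t²)/t), 0, √t, 0], [0, 0, 0, 1/√t]] (acting on the last four coordinates, identity elsewhere). Then the inradius of the ellipsoid A·B^{2n}(1) equals √(t/(π(√(1−t²)+1))), i.e., min over unit vectors v of ‖Av‖/√π equals √(t/(π(√(1−t²)+1))). -/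
private lemma comp4 (M : Matrix (Fin 4) (Fin 4) ℝ) (x : EuclideanSpace ℝ (Fin 4)) (i : Fin 4) :
    (Matrix.toEuclideanLin M).toContinuousLinearMap x i = M.mulVec (fun j => x j) i := rfl

private lemma normsq4 (y : EuclideanSpace ℝ (Fin 4)) :
    ‖y‖^2 = y 0^2 + y 1^2 + y 2^2 + y 3^2 := by
  rw [EuclideanSpace.norm_eq, Real.sq_sqrt (by positivity)]
  simp [Fin.sum_univ_four, sq_abs]

theorem opNorm_Ainv (t : ℝ) (ht0 : 0 < t) (ht1 : t < 1) :
    let Ainv : Matrix (Fin 4) (Fin 4) ℝ :=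
      !![1 / Real.sqrt t, 0, 0, 0;
         0, Real.sqrt t, 0, Real.sqrt ((1 - t ^ 2) / t);
         -Real.sqrt ((1 - t ^ 2) / t), 0, Real.sqrt t, 0;
         0, 0, 0, 1 / Real.sqrt t]
    ‖(Matrix.toEuclideanLin Ainv).toContinuousLinearMap‖ =
      Real.sqrt ((Real.sqrt (1 - t ^ 2) + 1) / t) := by
  intro Ainv
  set u : ℝ := Real.sqrt (1 - t ^ 2) with hu
  set st : ℝ := Real.sqrt t with hst
  set s : ℝ := Real.sqrt ((1 - t ^ 2) / t) with hs
  have ht2 : (0:ℝ) < 1 - t ^ 2 := by nlinarith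
  have hu2 : u ^ 2 = 1 - t ^ 2 := Real.sq_sqrt ht2.le
  have hu0 : 0 < u := Real.sqrt_pos.2 ht2
  have hu1 : u < 1 := by nlinarith [hu2, hu0]
  have hst2 : st ^ 2 = t := Real.sq_sqrt ht0.le
  have hst0 : 0 < st := Real.sqrt_pos.2 ht0
  have hsst : s * st = u := by
    rw [hs, hst, hu, ← Real.sqrt_mul (by positivity), div_mul_cancel₀ _ ht0.ne']
  have hL0 : (0:ℝ) ≤ (u + 1) / t := by positivity
  set f := (Matrix.toEuclideanLin Ainv).toContinuousLinearMap with hf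
  have hcomp : ∀ x : EuclideanSpace ℝ (Fin 4),
      f x 0 = 1 / st * x 0 ∧ f x 1 = st * x 1 + s * x 3 ∧
      f x 2 = -s * x 0 + st * x 2 ∧ f x 3 = 1 / st * x 3 := by
    intro x
    refine ⟨?_, ?_, ?_, ?_⟩ <;>
      · rw [hf, comp4]
        simp [Ainv, Matrix.mulVec, dotProduct, Fin.sum_univ_four, ← hst, ← hs]
        try ring
  -- squared norm identity, multiplied by t
  have hsq : ∀ x : EuclideanSpace ℝ (Fin 4),
      t * ‖f x‖ ^ 2 = (x 0)^2 + (t * x 1 + u * x 3)^2 + (t * x 2 - u * x 0)^2 + (x 3)^2 := by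
    intro x
    obtain ⟨h0, h1, h2, h3⟩ := hcomp x
    rw [normsq4, h0, h1, h2, h3]
    have hs' : s = u / st := by rw [eq_div_iff hst0.ne', hsst]
    rw [hs', ← hst2]
    field_simp
    ring
  have hub : ‖f‖ ≤ Real.sqrt ((u + 1) / t) := by
    apply ContinuousLinearMap.opNorm_le_bound _ (Real.sqrt_nonneg _)
    intro x
    have hineq : t * ‖f x‖ ^ 2 ≤ (u + 1) * ‖x‖ ^ 2 := by
      rw [hsq x, normsq4 x]
      nlinarith [sq_nonneg ((1-u)*(x 0) + t*(x 2)), sq_nonneg (t*(x 1) - (1-u)*(x 3)),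
        mul_pos hu0 (sub_pos.2 hu1), mul_nonneg hu0.le (sq_nonneg ((1-u)*(x 0)+t*(x 2))),
        mul_nonneg hu0.le (sq_nonneg (t*(x 1)-(1-u)*(x 3)))]
    have h2 : ‖f x‖ ^ 2 ≤ ((u + 1) / t) * ‖x‖ ^ 2 := by
      rw [div_mul_eq_mul_div, le_div_iff₀ ht0]
      linarith [hineq]
    calc ‖f x‖ = Real.sqrt (‖f x‖ ^ 2) := (Real.sqrt_sq (norm_nonneg _)).symm
      _ ≤ Real.sqrt (((u + 1) / t) * ‖x‖ ^ 2) := Real.sqrt_le_sqrt h2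
      _ = Real.sqrt ((u + 1) / t) * ‖x‖ := by
          rw [Real.sqrt_mul hL0, Real.sqrt_sq (norm_nonneg _)]
  have hlb : Real.sqrt ((u + 1) / t) ≤ ‖f‖ := by
    set v : EuclideanSpace ℝ (Fin 4) := (WithLp.equiv 2 (Fin 4 → ℝ)).symm ![1+u, 0, -t, 0] with hv
    have hv0 : v 0 = 1 + u := rfl
    have hv1 : v 1 = 0 := rfl
    have hv2 : v 2 = -t := rfl
    have hv3 : v 3 = 0 := rfl
    have hvn : ‖v‖ ^ 2 = (1 + u) ^ 2 + t ^ 2 := by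
      rw [normsq4, hv0, hv1, hv2, hv3]; ring
    have hfv : t * ‖f v‖ ^ 2 = (u + 1) * ‖v‖ ^ 2 := by
      rw [hsq v, hvn, hv0, hv1, hv2, hv3]
      linear_combination (u + u ^ 2 + t ^ 2) * hu2
    have hvpos : 0 < ‖v‖ := by
      rw [norm_pos_iff]
      intro h
      rw [h] at hv0
      simp at hv0
      linarith
    have hfveq : ‖f v‖ = Real.sqrt ((u + 1) / t) * ‖v‖ := by
      have h2 : ‖f v‖ ^ 2 = ((u + 1) / t) * ‖v‖ ^ 2 := by
        rw [div_mul_eq_mul_div, eq_div_iff ht0.ne']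
        linarith [hfv]
      calc ‖f v‖ = Real.sqrt (‖f v‖ ^ 2) := (Real.sqrt_sq (norm_nonneg _)).symm
        _ = Real.sqrt ((u + 1) / t) * ‖v‖ := by
            rw [h2, Real.sqrt_mul hL0, Real.sqrt_sq (norm_nonneg _)]
    have hle := f.le_opNorm v
    rw [hfveq] at hle
    exact le_of_mul_le_mul_right hle hvpos
  exact le_antisymm hub hlb
end

section
/- For every t ∈ (0,1): t/(√(1−t²)+1) ≤ f(t) and t² ≤ f(t), where f(t) = sqrt(2(1/t²−1)(√(1−t²)−1)+1). -/
theorem f_dominates_both_bounds (t : ℝ) (ht0 : 0 < t) (ht1 : t < 1) :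
    t / (Real.sqrt (1 - t ^ 2) + 1) ≤
      Real.sqrt (2 * (1 / t ^ 2 - 1) * (Real.sqrt (1 - t ^ 2) - 1) + 1) ∧
    t ^ 2 ≤ Real.sqrt (2 * (1 / t ^ 2 - 1) * (Real.sqrt (1 - t ^ 2) - 1) + 1) := by
  set s := Real.sqrt (1 - t ^ 2) with hs
  have ht2 : 0 ≤ 1 - t ^ 2 := by nlinarith
  have hs0 : 0 ≤ s := Real.sqrt_nonneg _
  have hs2 : s ^ 2 = 1 - t ^ 2 := Real.sq_sqrt ht2
  have hs1 : s < 1 := by nlinarith [hs2]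
  have ht0' : t ^ 2 ≠ 0 := by positivity
  have hsp : (0:ℝ) < 1 + s := by linarith
  have hE : 2 * (1 / t ^ 2 - 1) * (s - 1) + 1 = (1 - s) * (1 + 2 * s) / (1 + s) := by
    have h : t ^ 2 = (1 - s) * (1 + s) := by nlinarith [hs2]
    have h1s : (1:ℝ) - s ≠ 0 := by linarith
    rw [eq_div_iff (ne_of_gt hsp), h]
    field_simp
    ring
  constructor
  · rw [hE, Real.le_sqrt (by positivity)]
    · rw [div_pow, div_le_div_iff₀ (by positivity) hsp]
      nlinarith [hs2, sq_nonneg s, sq_nonneg (s*t)]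
    · exact div_nonneg (mul_nonneg (by linarith) (by linarith)) hsp.le
  · rw [hE, Real.le_sqrt (by positivity)]
    · rw [le_div_iff₀ hsp]
      have h : t ^ 2 = (1 - s) * (1 + s) := by nlinarith [hs2]
      rw [h]
      nlinarith [mul_nonneg (mul_nonneg (sub_nonneg.2 hs1.le) (pow_nonneg hs0 3)) (by linarith : (0:ℝ) ≤ 2 + s)]
    · exact div_nonneg (mul_nonneg (by linarith) (by linarith)) hsp.le
end

section
/- Let K₁ ⊂ ℝ^{2n}, K₂ ⊂ ℝ^{2m} be convex bodies containing the origin. Then their symplectic 2-product K₁ ×₂ K₂ := ⋃_{0≤s≤1} ((1−s)^{1/2}K₁ × s^{1/2}K₂) is a convex subset of ℝ^{2n+2m}. -/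
open Pointwise

lemma mem_smul_iff_gauge_le {E : Type*} [NormedAddCommGroup E] [NormedSpace ℝ E]
    {K : Set E} (hconv : Convex ℝ K) (hcpt : IsCompact K) (hint : (0 : E) ∈ interior K)
    {r : ℝ} (hr : 0 ≤ r) (x : E) : x ∈ r • K ↔ gauge K x ≤ r := by
  have hnhds : K ∈ nhds (0 : E) := mem_interior_iff_mem_nhds.1 hint
  have habs : Absorbent ℝ K := absorbent_nhds_zero hnhds
  have hbdd : Bornology.IsVonNBounded ℝ K :=
    NormedSpace.isVonNBounded_of_isBounded _ hcpt.isBounded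
  rcases eq_or_lt_of_le hr with h0 | hpos
  · subst h0
    rw [Set.zero_smul_set ⟨0, interior_subset hint⟩, Set.mem_zero]
    constructor
    · rintro rfl; simp [gauge_zero]
    · intro h
      exact (gauge_eq_zero habs hbdd).1 (le_antisymm h (gauge_nonneg x))
  · have h5 : r⁻¹ • x ∈ K ↔ gauge K (r⁻¹ • x) ≤ 1 := by
      conv_lhs => rw [← hcpt.isClosed.closure_eq]
      exact (gauge_le_one_iff_mem_closure hconv hnhds).symm
    rw [Set.mem_smul_set_iff_inv_smul_mem₀ (ne_of_gt hpos), h5,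
      gauge_smul_of_nonneg (inv_nonneg.2 hpos.le), smul_eq_mul,
      inv_mul_le_iff₀ hpos, mul_one]

theorem symplectic_two_product_convex (n m : ℕ)
    (K₁ : Set (Fin (2 * n) → ℝ)) (K₂ : Set (Fin (2 * m) → ℝ))
    (hK₁conv : Convex ℝ K₁) (hK₂conv : Convex ℝ K₂)
    (hK₁cpt : IsCompact K₁) (hK₂cpt : IsCompact K₂)
    (hK₁int : (0 : Fin (2 * n) → ℝ) ∈ interior K₁)
    (hK₂int : (0 : Fin (2 * m) → ℝ) ∈ interior K₂) :
    Convex ℝ (⋃ s ∈ Set.Icc (0 : ℝ) 1,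
      (Real.sqrt (1 - s) • K₁) ×ˢ (Real.sqrt s • K₂)) := by
  have habs₁ : Absorbent ℝ K₁ :=
    absorbent_nhds_zero (mem_interior_iff_mem_nhds.1 hK₁int)
  have habs₂ : Absorbent ℝ K₂ :=
    absorbent_nhds_zero (mem_interior_iff_mem_nhds.1 hK₂int)
  rintro ⟨x₁, y₁⟩ hz₁ ⟨x₂, y₂⟩ hz₂ a b ha hb hab
  simp only [Set.mem_iUnion, Set.mem_prod, Set.mem_Icc] at hz₁ hz₂ ⊢
  obtain ⟨s, ⟨hs0, hs1⟩, hx₁, hy₁⟩ := hz₁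
  obtain ⟨t, ⟨ht0, ht1⟩, hx₂, hy₂⟩ := hz₂
  rw [mem_smul_iff_gauge_le hK₁conv hK₁cpt hK₁int (Real.sqrt_nonneg _)] at hx₁ hx₂
  rw [mem_smul_iff_gauge_le hK₂conv hK₂cpt hK₂int (Real.sqrt_nonneg _)] at hy₁ hy₂
  have hpx : gauge K₁ (a • x₁ + b • x₂) ≤ a * Real.sqrt (1 - s) + b * Real.sqrt (1 - t) := by
    calc gauge K₁ (a • x₁ + b • x₂) ≤ gauge K₁ (a • x₁) + gauge K₁ (b • x₂) :=
          gauge_add_le hK₁conv habs₁ _ _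
      _ = a * gauge K₁ x₁ + b * gauge K₁ x₂ := by
          rw [gauge_smul_of_nonneg ha, gauge_smul_of_nonneg hb]; rfl
      _ ≤ a * Real.sqrt (1 - s) + b * Real.sqrt (1 - t) :=
          add_le_add (mul_le_mul_of_nonneg_left hx₁ ha) (mul_le_mul_of_nonneg_left hx₂ hb)
  have hqy : gauge K₂ (a • y₁ + b • y₂) ≤ a * Real.sqrt s + b * Real.sqrt t := by
    calc gauge K₂ (a • y₁ + b • y₂) ≤ gauge K₂ (a • y₁) + gauge K₂ (b • y₂) :=
          gauge_add_le hK₂conv habs₂ _ _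
      _ = a * gauge K₂ y₁ + b * gauge K₂ y₂ := by
          rw [gauge_smul_of_nonneg ha, gauge_smul_of_nonneg hb]; rfl
      _ ≤ a * Real.sqrt s + b * Real.sqrt t :=
          add_le_add (mul_le_mul_of_nonneg_left hy₁ ha) (mul_le_mul_of_nonneg_left hy₂ hb)
  have hα0 : (0:ℝ) ≤ a * Real.sqrt (1 - s) + b * Real.sqrt (1 - t) := by positivity
  have hβ0 : (0:ℝ) ≤ a * Real.sqrt s + b * Real.sqrt t := by positivity
  have h1 : Real.sqrt (1 - s) ^ 2 = 1 - s := Real.sq_sqrt (by linarith)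
  have h2 : Real.sqrt (1 - t) ^ 2 = 1 - t := Real.sq_sqrt (by linarith)
  have h3 : Real.sqrt s ^ 2 = s := Real.sq_sqrt hs0
  have h4 : Real.sqrt t ^ 2 = t := Real.sq_sqrt ht0
  have hc : Real.sqrt (1 - s) * Real.sqrt (1 - t) + Real.sqrt s * Real.sqrt t ≤ 1 := by
    nlinarith [sq_nonneg (Real.sqrt (1 - s) - Real.sqrt (1 - t)),
      sq_nonneg (Real.sqrt s - Real.sqrt t)]
  have hc' := mul_le_mul_of_nonneg_left hc (by positivity : (0:ℝ) ≤ 2 * (a * b))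
  have hkey : (a * Real.sqrt (1 - s) + b * Real.sqrt (1 - t)) ^ 2
      + (a * Real.sqrt s + b * Real.sqrt t) ^ 2 ≤ 1 := by
    have hexp : (a * Real.sqrt (1 - s) + b * Real.sqrt (1 - t)) ^ 2
        + (a * Real.sqrt s + b * Real.sqrt t) ^ 2
        = a ^ 2 * (Real.sqrt (1 - s) ^ 2 + Real.sqrt s ^ 2)
          + b ^ 2 * (Real.sqrt (1 - t) ^ 2 + Real.sqrt t ^ 2)
          + 2 * (a * b) * (Real.sqrt (1 - s) * Real.sqrt (1 - t)
            + Real.sqrt s * Real.sqrt t) := by ring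
    rw [hexp, h1, h2, h3, h4]
    have h6 : a ^ 2 + b ^ 2 + 2 * (a * b) = 1 := by
      rw [show a ^ 2 + b ^ 2 + 2 * (a * b) = (a + b) ^ 2 from by ring, hab, one_pow]
    nlinarith [hc', h6]
  refine ⟨(a * Real.sqrt s + b * Real.sqrt t) ^ 2, ⟨by positivity, by nlinarith⟩, ?_, ?_⟩
  · rw [mem_smul_iff_gauge_le hK₁conv hK₁cpt hK₁int (Real.sqrt_nonneg _)]
    refine hpx.trans ?_
    rw [show a * Real.sqrt (1 - s) + b * Real.sqrt (1 - t)
        = Real.sqrt ((a * Real.sqrt (1 - s) + b * Real.sqrt (1 - t)) ^ 2) from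
        (Real.sqrt_sq hα0).symm]
    exact Real.sqrt_le_sqrt (by linarith)
  · rw [mem_smul_iff_gauge_le hK₂conv hK₂cpt hK₂int (Real.sqrt_nonneg _)]
    exact hqy.trans (le_of_eq (Real.sqrt_sq hβ0).symm)
end
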